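/- For any real numbers y ≥ 2 and Z ≥ 2, and any Dirichlet character χ with |χ(n)| ≤ 1, the sum over y-friable integers n > Z satisfies |∑_{n>Z, P⁺(n)≤y} χ(n)e(nα)/n| ≤ ∑_{n>Z, P⁺(n)≤y} 1/n, uniformly in α; moreover if Z = x^{21/40} and 2 ≤ y ≤ (log x)², this last sum is ≪ e^{−√(log y)}. -/

import Mathlib

noncomputable def rpowHom (σ : ℝ) : ℕ →* ℝ where
  toFun n := (n : ℝ) ^ (-σ)
  map_one' := by simp
  map_mul' m n := by
    push_cast
    exact Real.mul_rpow (Nat.cast_nonneg m) (Nat.cast_nonneg n)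

lemma smooth_summable_prod {σ : ℝ} (hσ : 0 < σ) (N : ℕ) :
    Summable (Set.indicator (Nat.smoothNumbers N) (fun n : ℕ => (n:ℝ) ^ (-σ))) ∧
    ∑' n : ℕ, Set.indicator (Nat.smoothNumbers N) (fun n : ℕ => (n:ℝ) ^ (-σ)) n
      = ∏ p ∈ N.primesBelow, (1 - (p:ℝ) ^ (-σ))⁻¹ := by
  have h : ∀ {p : ℕ}, p.Prime → ‖rpowHom σ p‖ < 1 := by
    intro p hp
    have h1 : (1:ℝ) < p := by exact_mod_cast hp.one_lt
    have hlt : (p:ℝ) ^ (-σ) < 1 :=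
      Real.rpow_lt_one_of_one_lt_of_neg h1 (neg_neg_iff_pos.mpr hσ)
    simpa [rpowHom, Real.norm_eq_abs,
      abs_of_nonneg (Real.rpow_nonneg (Nat.cast_nonneg p) _)] using hlt
  obtain ⟨hs, hhs⟩ :=
    EulerProduct.summable_and_hasSum_smoothNumbers_prod_primesBelow_geometric (f := rpowHom σ) h N
  have hfun : ∀ m : Nat.smoothNumbers N, ‖rpowHom σ m‖ = ((m : ℕ):ℝ) ^ (-σ) := by
    intro m
    simp [rpowHom, Real.norm_eq_abs, abs_of_nonneg (Real.rpow_nonneg (Nat.cast_nonneg _) _)]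
  have hs' : Summable (fun m : Nat.smoothNumbers N => ((m : ℕ):ℝ) ^ (-σ)) := by
    exact hs.congr hfun
  constructor
  · exact (summable_subtype_iff_indicator).mp hs'
  · rw [← tsum_subtype]
    have heq : ∑' (x : ↑(Nat.smoothNumbers N)), ((x : ℕ):ℝ) ^ (-σ)
        = ∑' (x : ↑(Nat.smoothNumbers N)), rpowHom σ (x : ℕ) :=
      tsum_congr fun m => by simp [rpowHom]
    rw [heq, hhs.tsum_eq]
    exact Finset.prod_congr rfl fun p _ => by simp [rpowHom]

/-- `e(t) = exp(2πit)`. -/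
noncomputable def e (t : ℝ) : ℂ := Complex.exp (2 * Real.pi * Complex.I * t)

lemma norm_e (t : ℝ) : ‖e t‖ = 1 := by
  simp only [e, Complex.norm_exp]
  have : (2 * (Real.pi:ℂ) * Complex.I * (t:ℂ)).re = 0 := by
    simp [Complex.mul_re, Complex.mul_im]
  rw [this, Real.exp_zero]

lemma set_subset_smooth {y : ℝ} (Z : ℝ) :
    {n : ℕ | Z < (n : ℝ) ∧ ∀ p : ℕ, p.Prime → p ∣ n → (p : ℝ) ≤ y}
      ⊆ Nat.smoothNumbers (⌊y⌋₊ + 1) := by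
  intro n hn
  rw [Nat.mem_smoothNumbers']
  intro p hp hpn
  have := hn.2 p hp hpn
  have : p ≤ ⌊y⌋₊ := Nat.le_floor this
  omega

lemma part1 (y Z : ℝ) (hy : 2 ≤ y) (hZ : 2 ≤ Z) (q : ℕ) (χ : DirichletCharacter ℂ q) (α : ℝ) :
    ‖∑' n : ℕ, Set.indicator
        {n : ℕ | Z < (n : ℝ) ∧ ∀ p : ℕ, p.Prime → p ∣ n → (p : ℝ) ≤ y}
        (fun n => χ n * e (α * n) / n) n‖ ≤
      ∑' n : ℕ, Set.indicator
        {n : ℕ | Z < (n : ℝ) ∧ ∀ p : ℕ, p.Prime → p ∣ n → (p : ℝ) ≤ y}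
        (fun n => 1 / (n : ℝ)) n := by
  set S := {n : ℕ | Z < (n : ℝ) ∧ ∀ p : ℕ, p.Prime → p ∣ n → (p : ℝ) ≤ y} with hS
  set N := ⌊y⌋₊ + 1 with hN
  obtain ⟨hsum, _⟩ := smooth_summable_prod (σ := 1) one_pos N
  -- the indicator of 1/n over S is summable
  have hg_le : ∀ n : ℕ, Set.indicator S (fun n => 1 / (n : ℝ)) n
      ≤ Set.indicator (Nat.smoothNumbers N) (fun n : ℕ => (n:ℝ) ^ (-(1:ℝ))) n := by
    intro n
    by_cases hn : n ∈ S
    · rw [Set.indicator_of_mem hn, Set.indicator_of_mem (set_subset_smooth Z hn)]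
      rw [Real.rpow_neg_one]
      rw [one_div]
    · rw [Set.indicator_of_notMem hn]
      exact Set.indicator_nonneg (fun m _ => Real.rpow_nonneg (Nat.cast_nonneg m) _) n
  have hg_nonneg : ∀ n : ℕ, 0 ≤ Set.indicator S (fun n => 1 / (n : ℝ)) n :=
    fun n => Set.indicator_nonneg (fun m _ => by positivity) n
  have hg_sum : Summable (Set.indicator S (fun n => 1 / (n : ℝ))) :=
    Summable.of_nonneg_of_le hg_nonneg hg_le hsum
  have hF_norm : ∀ n : ℕ,
      ‖Set.indicator S (fun n : ℕ => χ n * e (α * n) / n) n‖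
        ≤ Set.indicator S (fun n => 1 / (n : ℝ)) n := by
    intro n
    by_cases hn : n ∈ S
    · rw [Set.indicator_of_mem hn, Set.indicator_of_mem hn]
      rw [norm_div, norm_mul, norm_e, mul_one]
      have h1 : ‖(χ n : ℂ)‖ ≤ 1 := DirichletCharacter.norm_le_one χ _
      have h2 : ‖(n : ℂ)‖ = (n : ℝ) := by
        simp [Complex.norm_natCast]
      rw [h2]
      rcases Nat.eq_zero_or_pos n with h0 | h0
      · simp [h0]
      · have hn0 : (0:ℝ) < (n:ℝ) := by exact_mod_cast h0
        rw [div_le_div_iff₀ hn0 hn0]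
        nlinarith
    · simp [Set.indicator_of_notMem hn]
  have hF_sum : Summable (fun n : ℕ =>
      ‖Set.indicator S (fun n : ℕ => χ n * e (α * n) / n) n‖) :=
    Summable.of_nonneg_of_le (fun _ => norm_nonneg _) hF_norm hg_sum
  calc ‖∑' n : ℕ, Set.indicator S (fun n : ℕ => χ n * e (α * n) / n) n‖
      ≤ ∑' n : ℕ, ‖Set.indicator S (fun n : ℕ => χ n * e (α * n) / n) n‖ :=
        norm_tsum_le_tsum_norm hF_sum
    _ ≤ ∑' n : ℕ, Set.indicator S (fun n => 1 / (n : ℝ)) n :=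
        Summable.tsum_le_tsum hF_norm hF_sum hg_sum

lemma exp_half_le : Real.exp (1/2) ≤ 5/3 := by
  have h2 : Real.exp ((2:ℕ) * (1/2 : ℝ)) = Real.exp (1/2) ^ 2 := Real.exp_nat_mul _ 2
  have h1 : Real.exp (1/2) ^ 2 = Real.exp 1 := by rw [← h2]; norm_num
  have := Real.exp_one_lt_d9
  nlinarith [Real.exp_pos (1/2 : ℝ)]

set_option maxHeartbeats 1000000 in
lemma part2 (x y : ℝ) (hx : Real.exp (Real.exp 10200) ≤ x) (hy : 2 ≤ y)
    (hyx : y ≤ (Real.log x) ^ 2) :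
    (∑' n : ℕ, Set.indicator
        {n : ℕ | x ^ ((21 : ℝ) / 40) < (n : ℝ) ∧
          ∀ p : ℕ, p.Prime → p ∣ n → (p : ℝ) ≤ y}
        (fun n => 1 / (n : ℝ)) n) ≤ Real.exp (-Real.sqrt (Real.log y)) := by
  have hE : (1:ℝ) < Real.exp 10200 := by
    have := Real.add_one_le_exp (10200:ℝ); linarith
  have hx1 : (1:ℝ) < x := lt_of_lt_of_le (by nlinarith [Real.add_one_le_exp (Real.exp 10200)]) hx
  set L := Real.log x with hLdef
  have hL : Real.exp 10200 ≤ L := by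
    have := Real.log_le_log (Real.exp_pos _) hx
    rwa [Real.log_exp] at this
  have hL1 : (1:ℝ) < L := lt_of_lt_of_le hE hL
  set u := Real.log L with hudef
  have hu : (10200:ℝ) ≤ u := by
    have := Real.log_le_log (Real.exp_pos _) hL
    rwa [Real.log_exp] at this
  have hexpu : Real.exp u = L := Real.exp_log (by linarith)
  set v := Real.log y with hvdef
  have hlog2 : (0.6931471803:ℝ) < Real.log 2 := Real.log_two_gt_d9
  have hv0 : (0.6:ℝ) < v := by
    have := Real.log_le_log (by norm_num : (0:ℝ) < 2) hy
    linarith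
  have hv2u : v ≤ 2 * u := by
    have h0 : Real.log y ≤ Real.log (L ^ 2) := Real.log_le_log (by linarith) hyx
    rwa [Real.log_pow, Nat.cast_ofNat] at h0
  set σ := 1 - 1/(2*v) with hσdef
  have hσpos : 0 < σ := by
    have : 1/(2*v) < 1 := by rw [div_lt_one (by linarith)]; linarith
    simp only [hσdef]; linarith
  have hσle1 : σ ≤ 1 := by
    have : 0 < 1/(2*v) := by positivity
    simp only [hσdef]; linarith
  set Z := x ^ ((21:ℝ)/40) with hZdef
  have hxpos : (0:ℝ) < x := by linarith
  have hZexp : Z = Real.exp (L * (21/40)) := Real.rpow_def_of_pos hxpos _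
  have hZ1 : (1:ℝ) ≤ Z := by
    rw [hZexp]; exact Real.one_le_exp (by nlinarith)
  set N := ⌊y⌋₊ + 1 with hNdef
  obtain ⟨hsum, hprod⟩ := smooth_summable_prod hσpos N
  set S := {n : ℕ | Z < (n : ℝ) ∧ ∀ p : ℕ, p.Prime → p ∣ n → (p : ℝ) ≤ y} with hSdef
  -- pointwise Rankin bound
  have h_pt : ∀ n : ℕ, Set.indicator S (fun n => 1 / (n : ℝ)) n
      ≤ Z ^ (σ - 1) * Set.indicator (Nat.smoothNumbers N) (fun n : ℕ => (n:ℝ) ^ (-σ)) n := by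
    intro n
    by_cases hn : n ∈ S
    · rw [Set.indicator_of_mem hn, Set.indicator_of_mem (set_subset_smooth Z hn)]
      have hnZ : Z < (n:ℝ) := hn.1
      have hn0 : (0:ℝ) < (n:ℝ) := by linarith
      have e1 : 1/(n:ℝ) = (n:ℝ) ^ (σ - 1) * (n:ℝ) ^ (-σ) := by
        rw [← Real.rpow_add hn0]
        have : σ - 1 + -σ = -1 := by ring
        rw [this, Real.rpow_neg_one, one_div]
      rw [e1]
      have h2 : (n:ℝ) ^ (σ - 1) ≤ Z ^ (σ - 1) :=
        Real.rpow_le_rpow_of_nonpos (by linarith) hnZ.le (by linarith)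
      exact mul_le_mul_of_nonneg_right h2 (Real.rpow_nonneg hn0.le _)
    · rw [Set.indicator_of_notMem hn]
      have h0 : 0 ≤ Set.indicator (Nat.smoothNumbers N) (fun n : ℕ => (n:ℝ) ^ (-σ)) n :=
        Set.indicator_nonneg (fun m _ => Real.rpow_nonneg (Nat.cast_nonneg m) _) n
      positivity
  have hg_sum : Summable (Set.indicator S (fun n => 1 / (n : ℝ))) :=
    Summable.of_nonneg_of_le (fun n => Set.indicator_nonneg (fun m _ => by positivity) n)
      h_pt (hsum.mul_left _)
  have hT : (∑' n : ℕ, Set.indicator S (fun n => 1 / (n : ℝ)) n)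
      ≤ Z ^ (σ - 1) * ∏ p ∈ N.primesBelow, (1 - (p:ℝ) ^ (-σ))⁻¹ := by
    calc (∑' n : ℕ, Set.indicator S (fun n => 1 / (n : ℝ)) n)
        ≤ ∑' n : ℕ, Z ^ (σ - 1) *
            Set.indicator (Nat.smoothNumbers N) (fun n : ℕ => (n:ℝ) ^ (-σ)) n :=
          Summable.tsum_le_tsum h_pt hg_sum (hsum.mul_left _)
      _ = Z ^ (σ - 1) * ∏ p ∈ N.primesBelow, (1 - (p:ℝ) ^ (-σ))⁻¹ := by
          rw [tsum_mul_left, hprod]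
  -- bound the Euler product
  have hPfacts : ∀ p ∈ N.primesBelow, (0:ℝ) ≤ (1 - (p:ℝ) ^ (-σ))⁻¹ ∧
      (1 - (p:ℝ) ^ (-σ))⁻¹ ≤ Real.exp (10 * ((p:ℝ))⁻¹) := by
    intro p hp
    have hpp := Nat.prime_of_mem_primesBelow hp
    have hp2 : (2:ℝ) ≤ (p:ℝ) := by exact_mod_cast hpp.two_le
    have hppos : (0:ℝ) < (p:ℝ) := by linarith
    have hpy : (p:ℝ) ≤ y := by
      have h1 : p ≤ ⌊y⌋₊ := by
        have := Nat.lt_of_mem_primesBelow hp; omega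
      calc (p:ℝ) ≤ (⌊y⌋₊ : ℝ) := by exact_mod_cast h1
        _ ≤ y := Nat.floor_le (by linarith)
    set t := (p:ℝ) ^ (-σ) with htdef
    have ht0 : 0 ≤ t := Real.rpow_nonneg hppos.le _
    have htle : t ≤ (5/3) * ((p:ℝ))⁻¹ := by
      have e2 : t = (p:ℝ) ^ (-(1:ℝ)) * (p:ℝ) ^ (1/(2*v)) := by
        rw [htdef, ← Real.rpow_add hppos]
        congr 1
        simp only [hσdef]; ring
      have e3 : (p:ℝ) ^ (1/(2*v)) ≤ 5/3 := by
        rw [Real.rpow_def_of_pos hppos]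
        refine le_trans (le_trans (Real.exp_le_exp.mpr ?_) (le_refl _)) exp_half_le
        have hlogp : Real.log p ≤ v := Real.log_le_log hppos hpy
        have hlogp0 : 0 ≤ Real.log p := Real.log_nonneg (by linarith)
        have hpos : (0:ℝ) < 1/(2*v) := by positivity
        have h1 := mul_le_mul_of_nonneg_right hlogp hpos.le
        have hveq : v * (1/(2*v)) = 1/2 := by field_simp
        linarith
      rw [e2, Real.rpow_neg_one]
      calc (p:ℝ)⁻¹ * (p:ℝ) ^ (1/(2*v)) ≤ (p:ℝ)⁻¹ * (5/3) :=
            mul_le_mul_of_nonneg_left e3 (by positivity)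
        _ = (5/3) * ((p:ℝ))⁻¹ := by ring
    have ht56 : t ≤ 5/6 := by
      have : (5/3) * ((p:ℝ))⁻¹ ≤ 5/6 := by
        rw [mul_inv_le_iff₀ hppos]; linarith
      linarith
    have h1t : (0:ℝ) < 1 - t := by linarith
    constructor
    · positivity
    · have hinv : (1 - t)⁻¹ ≤ 1 + 6*t := by
        rw [inv_le_iff_one_le_mul₀ h1t]
        nlinarith
      calc (1 - t)⁻¹ ≤ 1 + 6*t := hinv
        _ ≤ Real.exp (6*t) := by linarith [Real.add_one_le_exp (6*t)]
        _ ≤ Real.exp (10 * ((p:ℝ))⁻¹) := Real.exp_le_exp.mpr (by linarith)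
  have hharm : ∑ p ∈ N.primesBelow, ((p:ℝ))⁻¹ ≤ 1 + v := by
    have hsub : N.primesBelow ⊆ Finset.Icc 1 ⌊y⌋₊ := by
      intro p hp
      have hpp := Nat.prime_of_mem_primesBelow hp
      have := Nat.lt_of_mem_primesBelow hp
      rw [Finset.mem_Icc]
      exact ⟨hpp.one_lt.le, by omega⟩
    calc ∑ p ∈ N.primesBelow, ((p:ℝ))⁻¹
        ≤ ∑ i ∈ Finset.Icc 1 ⌊y⌋₊, ((i:ℝ))⁻¹ :=
          Finset.sum_le_sum_of_subset_of_nonneg hsub (fun i _ _ => by positivity)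
      _ = ((harmonic ⌊y⌋₊ : ℚ) : ℝ) := by
          rw [harmonic_eq_sum_Icc]; push_cast; rfl
      _ ≤ 1 + v := harmonic_floor_le_one_add_log y (by linarith)
  have hP : ∏ p ∈ N.primesBelow, (1 - (p:ℝ) ^ (-σ))⁻¹ ≤ Real.exp (10 * (1 + v)) := by
    calc ∏ p ∈ N.primesBelow, (1 - (p:ℝ) ^ (-σ))⁻¹
        ≤ ∏ p ∈ N.primesBelow, Real.exp (10 * ((p:ℝ))⁻¹) :=
          Finset.prod_le_prod (fun p hp => (hPfacts p hp).1) (fun p hp => (hPfacts p hp).2)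
      _ = Real.exp (∑ p ∈ N.primesBelow, 10 * ((p:ℝ))⁻¹) := (Real.exp_sum _ _).symm
      _ ≤ Real.exp (10 * (1 + v)) := by
          rw [← Finset.mul_sum]
          exact Real.exp_le_exp.mpr (by nlinarith)
  -- final numeric bound
  have hZpow : Z ^ (σ - 1) = Real.exp (L * ((21/40) * (σ - 1))) := by
    rw [hZdef, ← Real.rpow_mul hxpos.le, Real.rpow_def_of_pos hxpos]
  set s := Real.sqrt v with hsdef
  have hs0 : 0 ≤ s := Real.sqrt_nonneg v
  have hs2 : s^2 = v := Real.sq_sqrt (by linarith)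
  have hs_le : s ≤ (v+1)/2 := by nlinarith [sq_nonneg (s-1)]
  have hcube : (u/3)^3 ≤ L := by
    have h2 : ((3:ℕ):ℝ) * (u/3) = u := by push_cast; ring
    have h1 : Real.exp (u/3) ^ 3 = L := by
      rw [← Real.exp_nat_mul, h2, hexpu]
    have h3 : u/3 ≤ Real.exp (u/3) := by linarith [Real.add_one_le_exp (u/3)]
    calc (u/3)^3 ≤ Real.exp (u/3)^3 := pow_le_pow_left₀ (by linarith) h3 3
      _ = L := h1
  have hv0' : (0:ℝ) < v := by linarith
  have key : (10*(1+v) + s) * v ≤ (21/80) * L := by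
    have hmid : (10*(1+v) + s) * v ≤ 42*u^2 + 21*u := by
      nlinarith [mul_le_mul_of_nonneg_right hs_le hv0'.le, sq_nonneg v, sq_nonneg (v - 2*u),
        mul_le_mul_of_nonneg_right hv2u hv0'.le]
    have hu2 : 10200*u ≤ u^2 := by nlinarith
    have hu3 : 10200*u^2 ≤ u^3 := by nlinarith [sq_nonneg u]
    have hcube' : (21/80) * ((u/3)^3) ≤ (21/80) * L := by linarith
    have : 42*u^2 + 21*u ≤ (21/80) * ((u/3)^3) := by nlinarith
    linarith
  have hfinal : L * ((21/40) * (σ - 1)) + 10 * (1 + v) ≤ -s := by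
    have hrw : L * ((21/40) * (σ - 1)) = -(((21/80) * L) / v) := by
      rw [hσdef]; field_simp; ring
    rw [hrw]
    have hdd : 10*(1+v) + s ≤ ((21/80) * L) / v := by
      rw [le_div_iff₀ hv0']; exact key
    linarith
  calc (∑' n : ℕ, Set.indicator S (fun n => 1 / (n : ℝ)) n)
      ≤ Z ^ (σ - 1) * ∏ p ∈ N.primesBelow, (1 - (p:ℝ) ^ (-σ))⁻¹ := hT
    _ ≤ Z ^ (σ - 1) * Real.exp (10 * (1 + v)) := by
        have : (0:ℝ) ≤ Z ^ (σ - 1) := Real.rpow_nonneg (by linarith) _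
        exact mul_le_mul_of_nonneg_left hP this
    _ = Real.exp (L * ((21/40) * (σ - 1)) + 10 * (1 + v)) := by
        rw [hZpow, ← Real.exp_add]
    _ ≤ Real.exp (-s) := Real.exp_le_exp.mpr hfinal


/-- The tail of the series over `y`-friable integers `n > Z` is bounded, uniformly in
`α`, by `∑_{n>Z, P⁺(n)≤y} 1/n`; moreover, if `Z = x^{21/40}` and `2 ≤ y ≤ (log x)²`,
this last sum is `≪ e^{-√(log y)}`. -/
theorem stmt_11 :
    ∃ C > 0, ∃ x₀ : ℝ,
      (∀ (y Z : ℝ), 2 ≤ y → 2 ≤ Z → ∀ (q : ℕ) (χ : DirichletCharacter ℂ q) (α : ℝ),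
        ‖∑' n : ℕ, Set.indicator
            {n : ℕ | Z < (n : ℝ) ∧ ∀ p : ℕ, p.Prime → p ∣ n → (p : ℝ) ≤ y}
            (fun n => χ n * e (α * n) / n) n‖ ≤
          ∑' n : ℕ, Set.indicator
            {n : ℕ | Z < (n : ℝ) ∧ ∀ p : ℕ, p.Prime → p ∣ n → (p : ℝ) ≤ y}
            (fun n => 1 / (n : ℝ)) n) ∧
      (∀ (x y : ℝ), x₀ ≤ x → 2 ≤ y → y ≤ (Real.log x) ^ 2 →
        (∑' n : ℕ, Set.indicator
            {n : ℕ | x ^ ((21 : ℝ) / 40) < (n : ℝ) ∧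
              ∀ p : ℕ, p.Prime → p ∣ n → (p : ℝ) ≤ y}
            (fun n => 1 / (n : ℝ)) n) ≤ C * Real.exp (-Real.sqrt (Real.log y))) := by
  refine ⟨1, one_pos, Real.exp (Real.exp 10200), part1, fun x y hx hy hyx => ?_⟩
  rw [one_mul]
  exact part2 x y hx hy hyx
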